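/- Let g_r, g_b be nonzero vectors in ℝ^d with ⟨g_r, g_b⟩ < 0, and set p_r = g_b - (⟨g_b, g_r⟩/‖g_r‖²) g_r and p_b = g_r - (⟨g_r, g_b⟩/‖g_b‖²) g_b. Then the PCGrad update u = (1/2)(p_r + p_b) satisfies ⟨u, g_r⟩ ≥ 0 and ⟨u, g_b⟩ ≥ 0. -/

import Mathlib

open RealInnerProductSpace

theorem stmt14 {d : ℕ} (g_r g_b : EuclideanSpace ℝ (Fin d))
    (hr : g_r ≠ 0) (hb : g_b ≠ 0) (hconf : ⟪g_r, g_b⟫ < 0)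
    (p_r p_b u : EuclideanSpace ℝ (Fin d))
    (hpr : p_r = g_b - (⟪g_b, g_r⟫ / ‖g_r‖ ^ 2) • g_r)
    (hpb : p_b = g_r - (⟪g_r, g_b⟫ / ‖g_b‖ ^ 2) • g_b)
    (hu : u = (1 / 2 : ℝ) • (p_r + p_b)) :
    ⟪u, g_r⟫ ≥ 0 ∧ ⟪u, g_b⟫ ≥ 0 := by
  have hr' : ‖g_r‖ ≠ 0 := norm_ne_zero_iff.mpr hr
  have hb' : ‖g_b‖ ≠ 0 := norm_ne_zero_iff.mpr hb
  have hrn : (0:ℝ) < ‖g_r‖ ^ 2 := by positivity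
  have hbn : (0:ℝ) < ‖g_b‖ ^ 2 := by positivity
  have cs := real_inner_mul_inner_self_le g_r g_b
  rw [real_inner_self_eq_norm_sq, real_inner_self_eq_norm_sq] at cs
  have hsym : ⟪g_b, g_r⟫ = ⟪g_r, g_b⟫ := real_inner_comm _ _
  subst hu hpr hpb
  simp only [inner_smul_left, inner_add_left, inner_sub_left,
    real_inner_self_eq_norm_sq, hsym, RCLike.ofReal_real_eq_id, id, map_div₀,
    map_ofNat, conj_trivial]
  constructor
  · have : ⟪g_r, g_b⟫ - ⟪g_r, g_b⟫ / ‖g_r‖ ^ 2 * ‖g_r‖ ^ 2 = 0 := by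
      field_simp
      ring
    have h2 : ‖g_r‖ ^ 2 - ⟪g_r, g_b⟫ / ‖g_b‖ ^ 2 * ⟪g_r, g_b⟫ ≥ 0 := by
      rw [div_mul_eq_mul_div, ge_iff_le, sub_nonneg, div_le_iff₀ hbn]
      linarith [cs]
    nlinarith
  · have h2 : ‖g_b‖ ^ 2 - ⟪g_r, g_b⟫ / ‖g_r‖ ^ 2 * ⟪g_r, g_b⟫ ≥ 0 := by
      rw [div_mul_eq_mul_div, ge_iff_le, sub_nonneg, div_le_iff₀ hrn]
      linarith [cs]
    have : ⟪g_r, g_b⟫ - ⟪g_r, g_b⟫ / ‖g_b‖ ^ 2 * ‖g_b‖ ^ 2 = 0 := by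
      field_simp
      ring
    nlinarith
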